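/- Assume the pushforward measures of both f and g are atomless. Suppose that for μ⊗μ-almost every pair (x,x') ∈ X × X, f(x) ≤ f(x') implies g(x) ≤ g(x'). Then there exists a monotone non-decreasing function β : [0,1] → [0,1] such that g(x) = β(f(x)) for μ-almost every x ∈ X. -/

import Mathlib

open MeasureTheory

open scoped ENNReal

/-- The "flat parts" of the CDF of an atomless bounded score are null: a.e. point is
a strict increase point of the CDF. -/
lemma flat_null_aux {X : Type*} [MeasurableSpace X] (μ : Measure X) [IsProbabilityMeasure μ]
    (g : X → ℝ) (hg : Measurable g) (hg1 : ∀ x, g x ≤ 1)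
    (hA : ∀ c : ℝ, μ (g ⁻¹' {c}) = 0) :
    ∀ᵐ x ∂μ, ∀ t : ℝ, t < g x → ¬ (μ {y | g y ≤ g x} ≤ μ {y | g y ≤ t}) := by
  classical
  have hGmono : ∀ a b : ℝ, a ≤ b → μ {y | g y ≤ a} ≤ μ {y | g y ≤ b} :=
    fun a b hab => measure_mono (fun y hy => le_trans hy hab)
  -- if the CDF does not increase on (q, s], the preimage of (q, s] is null
  have hIoc : ∀ q s : ℝ, q ≤ s → μ {y | g y ≤ s} ≤ μ {y | g y ≤ q} → μ (g ⁻¹' Set.Ioc q s) = 0 := by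
    intro q s hqsle hqs
    have hdisj : Disjoint {y | g y ≤ q} (g ⁻¹' Set.Ioc q s) := by
      refine Set.disjoint_left.2 fun y hy1 hy2 => ?_
      exact absurd hy2.1 (not_lt.2 hy1)
    have hmeas1 : MeasurableSet {y | g y ≤ q} := measurableSet_le hg measurable_const
    have hmeas2 : MeasurableSet (g ⁻¹' Set.Ioc q s) := hg measurableSet_Ioc
    have hsub : {y | g y ≤ q} ∪ g ⁻¹' Set.Ioc q s ⊆ {y | g y ≤ s} := by
      rintro y (hy | hy)
      · have hy' : g y ≤ q := hy
        exact le_trans hy' hqsle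
      · exact hy.2
    have hcalc : μ {y | g y ≤ q} + μ (g ⁻¹' Set.Ioc q s) ≤ μ {y | g y ≤ q} := by
      calc μ {y | g y ≤ q} + μ (g ⁻¹' Set.Ioc q s)
          = μ ({y | g y ≤ q} ∪ g ⁻¹' Set.Ioc q s) := (measure_union hdisj hmeas2).symm
        _ ≤ μ {y | g y ≤ s} := measure_mono hsub
        _ ≤ μ {y | g y ≤ q} := hqs
    have := (ENNReal.add_le_add_iff_left (measure_ne_top μ _)).1
      (by simpa using hcalc : μ {y | g y ≤ q} + μ (g ⁻¹' Set.Ioc q s) ≤ μ {y | g y ≤ q} + 0)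
    exact le_antisymm (by simpa using this) (by simp)
  -- each rational "flat level" gives a null set
  have hBq : ∀ q : ℚ,
      μ {x | (q : ℝ) < g x ∧ μ {y | g y ≤ g x} ≤ μ {y | g y ≤ (q : ℝ)}} = 0 := by
    intro q
    by_cases h1 : μ {y | g y ≤ (q : ℝ)} = 1
    · -- almost everything is ≤ q, so the set {q < g} is null
      have hcompl : μ {x | (q : ℝ) < g x} = 0 := by
        have hmeas : MeasurableSet {y | g y ≤ (q : ℝ)} := measurableSet_le hg measurable_const
        have := measure_add_measure_compl (μ := μ) hmeas
        rw [h1, measure_univ] at this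
        have : (1 : ℝ≥0∞) + μ {y | g y ≤ (q : ℝ)}ᶜ = 1 + 0 := by simpa using this
        have h0 : μ {y | g y ≤ (q : ℝ)}ᶜ = 0 :=
          (ENNReal.add_right_inj (by norm_num)).1 this
        have hset : {x | (q : ℝ) < g x} = {y | g y ≤ (q : ℝ)}ᶜ := by
          ext y; simp [not_le]
        rw [hset]; exact h0
      exact measure_mono_null (fun x hx => hx.1) hcompl
    · set S : Set ℝ := {s : ℝ | (q : ℝ) < s ∧ μ {y | g y ≤ s} ≤ μ {y | g y ≤ (q : ℝ)}} with hS
      have hsubS : {x | (q : ℝ) < g x ∧ μ {y | g y ≤ g x} ≤ μ {y | g y ≤ (q : ℝ)}} ⊆ g ⁻¹' S :=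
        fun x hx => hx
      by_cases hSne : S.Nonempty
      · -- S is bounded above by 1
        have hub : ∀ s ∈ S, s ≤ 1 := by
          intro s hs
          by_contra hcon
          push_neg at hcon
          have : {y | g y ≤ s} = Set.univ := by
            ext y; simp only [Set.mem_setOf_eq, Set.mem_univ, iff_true]
            exact le_trans (hg1 y) hcon.le
          have hs2 : μ {y | g y ≤ s} ≤ μ {y | g y ≤ (q : ℝ)} := hs.2
          rw [this, measure_univ] at hs2
          exact h1 (le_antisymm prob_le_one hs2)
        have hbdd : BddAbove S := ⟨1, hub⟩
        set c := sSup S with hc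
        have hSsub : S ⊆ Set.Ioo (q : ℝ) c ∪ {c} := by
          intro s hs
          have hsc : s ≤ c := le_csSup hbdd hs
          rcases eq_or_lt_of_le hsc with h | h
          · exact Or.inr (by simpa using h)
          · exact Or.inl ⟨hs.1, h⟩
        have hIoo : μ (g ⁻¹' Set.Ioo (q : ℝ) c) = 0 := by
          have hsub2 : g ⁻¹' Set.Ioo (q : ℝ) c ⊆
              ⋃ r : ℚ, g ⁻¹' (if (r : ℝ) ∈ S then Set.Ioc (q : ℝ) (r : ℝ) else ∅) := by
            intro x hx
            obtain ⟨s, hsS, hts⟩ := exists_lt_of_lt_csSup hSne hx.2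
            obtain ⟨r, hr1, hr2⟩ := exists_rat_btwn hts
            have hrS : (r : ℝ) ∈ S := ⟨lt_trans hx.1 hr1, le_trans (hGmono _ _ hr2.le) hsS.2⟩
            refine Set.mem_iUnion.2 ⟨r, ?_⟩
            simp only [if_pos hrS]
            exact ⟨hx.1, hr1.le⟩
          refine measure_mono_null hsub2 (measure_iUnion_null fun r => ?_)
          by_cases hrS : (r : ℝ) ∈ S
          · simp only [if_pos hrS]
            exact hIoc _ _ hrS.1.le hrS.2
          · simp [if_neg hrS]
        have : μ (g ⁻¹' S) = 0 := by
          refine measure_mono_null (fun x hx => ?_) (measure_union_null hIoo (hA c))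
          rcases hSsub hx with h | h
          · exact Or.inl h
          · exact Or.inr h
        exact measure_mono_null hsubS this
      · have : g ⁻¹' S = ∅ := by
          ext x; simp only [Set.mem_preimage, Set.mem_empty_iff_false, iff_false]
          exact fun hx => hSne ⟨g x, hx⟩
        exact measure_mono_null hsubS (by rw [this]; exact measure_empty)
  rw [ae_iff]
  refine measure_mono_null ?_ (measure_iUnion_null hBq)
  intro x hx
  simp only [Set.mem_setOf_eq, not_forall] at hx
  obtain ⟨t, ht, hle⟩ := hx
  rw [not_not] at hle
  obtain ⟨r, hr1, hr2⟩ := exists_rat_btwn ht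
  exact Set.mem_iUnion.2 ⟨r, hr2, le_trans hle (hGmono _ _ hr1.le)⟩

/-- the bias-function construction.
If, for `μ⊗μ`-almost every pair, `f`-order implies `g`-order, then there is a
non-decreasing bias function `β : [0,1] → [0,1]` with `g = β ∘ f` `μ`-a.e. -/
theorem exists_monotone_bias_function
    {X : Type*} [MeasurableSpace X] (μ : Measure X) [IsProbabilityMeasure μ]
    (f g : X → ℝ) (hf : Measurable f) (hg : Measurable g)
    (hf01 : ∀ x, f x ∈ Set.Icc (0 : ℝ) 1) (hg01 : ∀ x, g x ∈ Set.Icc (0 : ℝ) 1)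
    (hfAtomless : ∀ c : ℝ, μ.map f {c} = 0) (hgAtomless : ∀ c : ℝ, μ.map g {c} = 0)
    (hmono : ∀ᵐ q ∂(μ.prod μ), f q.1 ≤ f q.2 → g q.1 ≤ g q.2) :
    ∃ β : ℝ → ℝ, MonotoneOn β (Set.Icc (0 : ℝ) 1) ∧
      (∀ u ∈ Set.Icc (0 : ℝ) 1, β u ∈ Set.Icc (0 : ℝ) 1) ∧
      (∀ᵐ x ∂μ, g x = β (f x)) := by
  classical
  have hfA : ∀ c : ℝ, μ (f ⁻¹' {c}) = 0 := fun c => by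
    rw [← Measure.map_apply hf (measurableSet_singleton c)]; exact hfAtomless c
  have hgA : ∀ c : ℝ, μ (g ⁻¹' {c}) = 0 := fun c => by
    rw [← Measure.map_apply hg (measurableSet_singleton c)]; exact hgAtomless c
  -- CDFs (ℝ≥0∞-valued)
  set F : ℝ → ℝ≥0∞ := fun t => μ {x | f x ≤ t} with hFdef
  set G : ℝ → ℝ≥0∞ := fun t => μ {x | g x ≤ t} with hGdef
  have hFmono : ∀ a b : ℝ, a ≤ b → F a ≤ F b :=
    fun a b hab => measure_mono (fun y hy => le_trans hy hab)
  have hGmono : ∀ a b : ℝ, a ≤ b → G a ≤ G b :=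
    fun a b hab => measure_mono (fun y hy => le_trans hy hab)
  have hG1 : G 1 = 1 := by
    have : {x | g x ≤ (1 : ℝ)} = Set.univ := by
      ext y; simp [(hg01 y).2]
    simp only [hGdef, this, measure_univ]
  have hFle1 : ∀ u : ℝ, F u ≤ 1 := fun u => prob_le_one
  -- Fubini: split the product a.e. hypothesis
  have h2 : ∀ᵐ x ∂μ, ∀ᵐ y ∂μ, f x ≤ f y → g x ≤ g y := Measure.ae_ae_of_ae_prod hmono
  have hswap : ∀ᵐ q ∂(μ.prod μ), f q.2 ≤ f q.1 → g q.2 ≤ g q.1 := by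
    have hqmp := (Measure.measurePreserving_swap (μ := μ) (ν := μ)).quasiMeasurePreserving
    exact hqmp.tendsto_ae.eventually hmono
  have h1 : ∀ᵐ x ∂μ, ∀ᵐ y ∂μ, f y ≤ f x → g y ≤ g x := Measure.ae_ae_of_ae_prod hswap
  -- a.e., the CDF of f at f x equals the CDF of g at g x
  have key : ∀ᵐ x ∂μ, F (f x) = G (g x) := by
    filter_upwards [h1, h2] with x hx1 hx2
    -- first direction: F (f x) ≤ G (g x)
    have hdir1 : F (f x) ≤ G (g x) := by
      refine measure_mono_ae ?_
      filter_upwards [hx1] with y hy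
      exact hy
    -- second direction, via complements and atomlessness
    have hdir2' : μ {y | f x ≤ f y} ≤ μ {y | g x ≤ g y} := by
      refine measure_mono_ae ?_
      filter_upwards [hx2] with y hy
      exact hy
    have heqf : μ {y | f y ≤ f x} = μ {y | f y < f x} := by
      refine le_antisymm ?_ (measure_mono (Set.setOf_subset_setOf.2 fun y hy => le_of_lt hy))
      calc μ {y | f y ≤ f x} ≤ μ ({y | f y < f x} ∪ f ⁻¹' {f x}) := by
            refine measure_mono fun y hy => ?_
            have hy' : f y ≤ f x := hy
            rcases lt_or_eq_of_le hy' with h | h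
            · exact Or.inl h
            · exact Or.inr h
        _ ≤ μ {y | f y < f x} + μ (f ⁻¹' {f x}) := measure_union_le _ _
        _ = μ {y | f y < f x} := by rw [hfA, add_zero]
    have heqg : μ {y | g y ≤ g x} = μ {y | g y < g x} := by
      refine le_antisymm ?_ (measure_mono (Set.setOf_subset_setOf.2 fun y hy => le_of_lt hy))
      calc μ {y | g y ≤ g x} ≤ μ ({y | g y < g x} ∪ g ⁻¹' {g x}) := by
            refine measure_mono fun y hy => ?_
            have hy' : g y ≤ g x := hy
            rcases lt_or_eq_of_le hy' with h | h
            · exact Or.inl h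
            · exact Or.inr h
        _ ≤ μ {y | g y < g x} + μ (g ⁻¹' {g x}) := measure_union_le _ _
        _ = μ {y | g y < g x} := by rw [hgA, add_zero]
    have hsumf : μ {y | f y < f x} + μ {y | f x ≤ f y} = 1 := by
      have hmeas : MeasurableSet {y | f y < f x} := measurableSet_lt hf measurable_const
      have hcompl : {y | f x ≤ f y} = {y | f y < f x}ᶜ := by ext y; simp [not_lt]
      rw [hcompl, measure_add_measure_compl hmeas, measure_univ]
    have hsumg : μ {y | g y < g x} + μ {y | g x ≤ g y} = 1 := by
      have hmeas : MeasurableSet {y | g y < g x} := measurableSet_lt hg measurable_const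
      have hcompl : {y | g x ≤ g y} = {y | g y < g x}ᶜ := by ext y; simp [not_lt]
      rw [hcompl, measure_add_measure_compl hmeas, measure_univ]
    have hdir2 : G (g x) ≤ F (f x) := by
      have step : μ {y | g y < g x} + μ {y | f x ≤ f y} ≤
          μ {y | f y < f x} + μ {y | f x ≤ f y} := by
        calc μ {y | g y < g x} + μ {y | f x ≤ f y}
            ≤ μ {y | g y < g x} + μ {y | g x ≤ g y} := add_le_add le_rfl hdir2'
          _ = 1 := hsumg
          _ = μ {y | f y < f x} + μ {y | f x ≤ f y} := hsumf.symm
      have hlt : μ {y | g y < g x} ≤ μ {y | f y < f x} :=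
        (ENNReal.add_le_add_iff_right (measure_ne_top μ _)).1 step
      calc G (g x) = μ {y | g y < g x} := heqg
        _ ≤ μ {y | f y < f x} := hlt
        _ = F (f x) := heqf.symm
    exact le_antisymm hdir1 hdir2
  -- define β via a quantile-type construction
  set β : ℝ → ℝ := fun u => sInf {t : ℝ | t ∈ Set.Icc (0 : ℝ) 1 ∧ F u ≤ G t} with hβdef
  have hbdd : ∀ u : ℝ, BddBelow {t : ℝ | t ∈ Set.Icc (0 : ℝ) 1 ∧ F u ≤ G t} :=
    fun u => ⟨0, fun t ht => ht.1.1⟩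
  have hne : ∀ u : ℝ, (1 : ℝ) ∈ {t : ℝ | t ∈ Set.Icc (0 : ℝ) 1 ∧ F u ≤ G t} :=
    fun u => ⟨⟨zero_le_one, le_refl 1⟩, by rw [hG1]; exact hFle1 u⟩
  refine ⟨β, ?_, ?_, ?_⟩
  · -- monotone
    intro u hu v hv huv
    refine csInf_le_csInf (hbdd u) ⟨1, hne v⟩ ?_
    intro t ht
    exact ⟨ht.1, le_trans (hFmono u v huv) ht.2⟩
  · -- range
    intro u _
    constructor
    · exact le_csInf ⟨1, hne u⟩ fun t ht => ht.1.1
    · exact csInf_le (hbdd u) (hne u)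
  · -- a.e. equality
    filter_upwards [key, flat_null_aux μ g hg (fun x => (hg01 x).2) hgA] with x hkey hflat
    have hmem : g x ∈ {t : ℝ | t ∈ Set.Icc (0 : ℝ) 1 ∧ F (f x) ≤ G t} :=
      ⟨hg01 x, le_of_eq hkey⟩
    refine le_antisymm ?_ (csInf_le (hbdd (f x)) hmem)
    refine le_csInf ⟨g x, hmem⟩ fun t ht => ?_
    by_contra hcon
    push_neg at hcon
    exact hflat t hcon (le_trans (le_of_eq hkey.symm) ht.2)
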